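/- Let N be an even positive integer and c = (c₁,c₂,c₃) ∈ ℝ³. For any computational basis index i : Fin N → Fin 2 with parity p = (Σₖ i(k)) mod 2, and for each sign s ∈ {+1,−1}, the vector v = (1/√2)(e_i + s·σ₁^{⊗N} e_i), where e_i is the corresponding standard basis vector of ℂ^{2^N}, is an eigenvector of ϖ(c) with eigenvalue 2^{−N}(1 + s·c₁ + s·(−1)^{N/2}·(−1)^p·c₂ + (−1)^p·c₃). -/

import Mathlib

open Matrix BigOperators Polynomial

/-- The three Pauli matrices. -/
noncomputable def pauli : Fin 3 → Matrix (Fin 2) (Fin 2) ℂ :=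
  ![!![0, 1; 1, 0], !![0, -Complex.I; Complex.I, 0], !![1, 0; 0, -1]]

/-- The `N`-fold Kronecker power of a 2×2 matrix, with rows and columns indexed by
`Fin N → Fin 2` (the `N`-qubit computational basis). -/
noncomputable def kronPow (A : Matrix (Fin 2) (Fin 2) ℂ) (N : ℕ) :
    Matrix (Fin N → Fin 2) (Fin N → Fin 2) ℂ :=
  Matrix.of fun i j => ∏ k, A (i k) (j k)

/-- The `M³_N` state `ϖ(c) = 2^{-N} (I + c₁ σ₁^{⊗N} + c₂ σ₂^{⊗N} + c₃ σ₃^{⊗N})`. -/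
noncomputable def Mstate (N : ℕ) (c : Fin 3 → ℝ) :
    Matrix (Fin N → Fin 2) (Fin N → Fin 2) ℂ :=
  ((2 : ℂ) ^ N)⁻¹ • (1 + ∑ j : Fin 3, (c j : ℂ) • kronPow (pauli j) N)


def Evec (N : ℕ) (i : Fin N → Fin 2) : (Fin N → Fin 2) → ℂ := fun j => if j = i then 1 else 0

def qflip {N : ℕ} (i : Fin N → Fin 2) : Fin N → Fin 2 := fun k => i k + 1

lemma qflip_flip {N : ℕ} (i : Fin N → Fin 2) : qflip (qflip i) = i := by
  funext k
  have : ∀ a : Fin 2, a + 1 + 1 = a := by decide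
  exact this (i k)

lemma mulVec_Evec {N : ℕ} (M : Matrix (Fin N → Fin 2) (Fin N → Fin 2) ℂ) (i : Fin N → Fin 2) :
    M.mulVec (Evec N i) = fun j => M j i := by
  funext j
  simp [Matrix.mulVec, dotProduct, Evec]

lemma K0 {N : ℕ} (i : Fin N → Fin 2) :
    (kronPow (pauli 0) N).mulVec (Evec N i) = Evec N (qflip i) := by
  rw [mulVec_Evec]
  funext j
  simp only [kronPow, Matrix.of_apply, Evec]
  by_cases h : j = qflip i
  · subst h
    rw [if_pos rfl]
    apply Finset.prod_eq_one
    intro k _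
    have : ∀ a : Fin 2, pauli 0 (a + 1) a = 1 := by
      intro a; fin_cases a <;> simp [pauli]
    exact this (i k)
  · rw [if_neg h]
    have : ∃ k, j k ≠ qflip i k := by
      by_contra hc
      push_neg at hc
      exact h (funext hc)
    obtain ⟨k, hk⟩ := this
    apply Finset.prod_eq_zero (Finset.mem_univ k)
    have : ∀ a b : Fin 2, a ≠ b + 1 → pauli 0 a b = 0 := by
      intro a b; fin_cases a <;> fin_cases b <;> simp [pauli]
    exact this _ _ hk

lemma K1 {N : ℕ} (hN : Even N) (i : Fin N → Fin 2) :
    (kronPow (pauli 1) N).mulVec (Evec N i) =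
      ((-1:ℂ)^(N/2) * (-1:ℂ)^(∑ k, (i k : ℕ))) • Evec N (qflip i) := by
  rw [mulVec_Evec]
  funext j
  simp only [kronPow, Matrix.of_apply, Evec, Pi.smul_apply, smul_eq_mul]
  by_cases h : j = qflip i
  · subst h
    rw [if_pos rfl, mul_one]
    have hfac : ∀ a : Fin 2, pauli 1 (a + 1) a = Complex.I * (-1:ℂ)^(a:ℕ) := by
      intro a; fin_cases a <;> simp [pauli]
    calc ∏ k, pauli 1 (qflip i k) (i k)
        = ∏ k, (Complex.I * (-1:ℂ)^((i k):ℕ)) := by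
          apply Finset.prod_congr rfl; intro k _; exact hfac (i k)
      _ = Complex.I ^ N * (-1:ℂ)^(∑ k, (i k : ℕ)) := by
          rw [Finset.prod_mul_distrib, Finset.prod_const, Finset.card_univ, Fintype.card_fin,
            Finset.prod_pow_eq_pow_sum]
      _ = (-1:ℂ)^(N/2) * (-1:ℂ)^(∑ k, (i k : ℕ)) := by
          obtain ⟨m, hm⟩ := hN
          subst hm
          have hI : Complex.I ^ (m + m) = (-1:ℂ)^((m + m)/2) := by
            rw [show m + m = 2 * m by ring, pow_mul, Complex.I_sq,
              Nat.mul_div_cancel_left _ (by norm_num)]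
          rw [hI]
  · rw [if_neg h, mul_zero]
    have : ∃ k, j k ≠ qflip i k := by
      by_contra hc; push_neg at hc; exact h (funext hc)
    obtain ⟨k, hk⟩ := this
    apply Finset.prod_eq_zero (Finset.mem_univ k)
    have : ∀ a b : Fin 2, a ≠ b + 1 → pauli 1 a b = 0 := by
      intro a b; fin_cases a <;> fin_cases b <;> simp [pauli]
    exact this _ _ hk

lemma K2 {N : ℕ} (i : Fin N → Fin 2) :
    (kronPow (pauli 2) N).mulVec (Evec N i) =
      ((-1:ℂ)^(∑ k, (i k : ℕ))) • Evec N i := by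
  rw [mulVec_Evec]
  funext j
  simp only [kronPow, Matrix.of_apply, Evec, Pi.smul_apply, smul_eq_mul]
  by_cases h : j = i
  · subst h
    rw [if_pos rfl, mul_one]
    have hfac : ∀ a : Fin 2, pauli 2 a a = (-1:ℂ)^(a:ℕ) := by
      intro a; fin_cases a <;> simp [pauli]
    calc ∏ k, pauli 2 (j k) (j k)
        = ∏ k, ((-1:ℂ)^((j k):ℕ)) := by
          apply Finset.prod_congr rfl; intro k _; exact hfac (j k)
      _ = (-1:ℂ)^(∑ k, (j k : ℕ)) := Finset.prod_pow_eq_pow_sum _ _ _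
  · rw [if_neg h, mul_zero]
    have : ∃ k, j k ≠ i k := by
      by_contra hc; push_neg at hc; exact h (funext hc)
    obtain ⟨k, hk⟩ := this
    apply Finset.prod_eq_zero (Finset.mem_univ k)
    have : ∀ a b : Fin 2, a ≠ b → pauli 2 a b = 0 := by
      intro a b; fin_cases a <;> fin_cases b <;> simp [pauli]
    exact this _ _ hk

lemma sum_flip {N : ℕ} (hN : Even N) (i : Fin N → Fin 2) :
    (-1:ℂ)^(∑ k, ((qflip i) k : ℕ)) = (-1:ℂ)^(∑ k, (i k : ℕ)) := by
  have h1 : ∀ a : Fin 2, ((a + 1 : Fin 2) : ℕ) = 1 - (a : ℕ) := by decide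
  have hle : ∑ k, (i k : ℕ) ≤ N := by
    calc ∑ k, (i k : ℕ) ≤ ∑ _k : Fin N, 1 := Finset.sum_le_sum (fun k _ => by omega)
      _ = N := by simp
  have htot : (∑ k, (i k : ℕ)) + ∑ k, ((qflip i) k : ℕ) = N := by
    rw [← Finset.sum_add_distrib]
    have h2 : ∀ a : Fin 2, (a:ℕ) + ((a+1 : Fin 2):ℕ) = 1 := by decide
    simp [qflip, h2]
  have hsum : ∑ k, ((qflip i) k : ℕ) = N - ∑ k, (i k : ℕ) := by omega
  rw [hsum]
  have key : (-1:ℂ)^(N - ∑ k, (i k : ℕ)) * (-1:ℂ)^(∑ k, (i k : ℕ)) = 1 := by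
    rw [← pow_add, Nat.sub_add_cancel hle, hN.neg_one_pow]
  have sq : (-1:ℂ)^(∑ k, (i k : ℕ)) * (-1:ℂ)^(∑ k, (i k : ℕ)) = 1 := by
    rw [← pow_add]
    exact (Even.add_self _).neg_one_pow
  linear_combination (-1:ℂ)^(∑ k, (i k : ℕ)) * key - (-1:ℂ)^(N - ∑ k, (i k : ℕ)) * sq


theorem stmt1 (N : ℕ) (hN : Even N) (hN0 : 0 < N) (c : Fin 3 → ℝ)
    (i : Fin N → Fin 2) (p : ℕ) (hp : p = (∑ k, (i k : ℕ)) % 2)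
    (s : ℝ) (hs : s = 1 ∨ s = -1)
    (e : (Fin N → Fin 2) → ℂ) (he : e = fun j => if j = i then 1 else 0)
    (v : (Fin N → Fin 2) → ℂ)
    (hv : v = ((Real.sqrt 2 : ℝ) : ℂ)⁻¹ • (e + (s : ℂ) • (kronPow (pauli 0) N).mulVec e)) :
    (Mstate N c).mulVec v =
      ((((2:ℝ)^N)⁻¹ *
        (1 + s * c 0 + s * (-1:ℝ)^(N/2) * (-1:ℝ)^p * c 1 + (-1:ℝ)^p * c 2) : ℝ) : ℂ) • v
      ∧ v ≠ 0 := by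
  have heE : e = Evec N i := he
  subst heE hv hp
  set f := qflip i with hf
  set m := ∑ k, (i k : ℕ) with hm
  set β : ℂ := (-1:ℂ)^(N/2) * (-1:ℂ)^m with hβ
  set γ : ℂ := (-1:ℂ)^m with hγ
  have hfi : f ≠ i := by
    intro h
    have h2 : ∀ a : Fin 2, a + 1 ≠ a := by decide
    exact h2 _ (congrFun h ⟨0, hN0⟩)
  have hsf : (-1:ℂ)^(∑ k, (f k : ℕ)) = γ := sum_flip hN i
  have M_i : (Mstate N c).mulVec (Evec N i) =
      ((2:ℂ)^N)⁻¹ • (Evec N i + (c 0 : ℂ) • Evec N f +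
        (c 1 : ℂ) • β • Evec N f + (c 2 : ℂ) • γ • Evec N i) := by
    rw [Mstate, Matrix.smul_mulVec, Matrix.add_mulVec, Matrix.one_mulVec,
      Fin.sum_univ_three, Matrix.add_mulVec, Matrix.add_mulVec,
      Matrix.smul_mulVec, Matrix.smul_mulVec, Matrix.smul_mulVec,
      K0, K1 hN, K2]
    module
  have M_f : (Mstate N c).mulVec (Evec N f) =
      ((2:ℂ)^N)⁻¹ • (Evec N f + (c 0 : ℂ) • Evec N i +
        (c 1 : ℂ) • β • Evec N i + (c 2 : ℂ) • γ • Evec N f) := by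
    rw [Mstate, Matrix.smul_mulVec, Matrix.add_mulVec, Matrix.one_mulVec,
      Fin.sum_univ_three, Matrix.add_mulVec, Matrix.add_mulVec,
      Matrix.smul_mulVec, Matrix.smul_mulVec, Matrix.smul_mulVec,
      K0, K1 hN, K2, qflip_flip, hsf, hβ]
    module
  rw [K0, ← hf]
  have hmod : ((-1:ℝ))^(m % 2) = (-1:ℝ)^m := by
    conv_rhs => rw [← Nat.div_add_mod m 2]
    rw [pow_add, pow_mul]
    norm_num
  constructor
  · rw [Matrix.mulVec_smul, Matrix.mulVec_add, Matrix.mulVec_smul, M_i, M_f]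
    funext j
    simp only [Pi.smul_apply, Pi.add_apply, smul_eq_mul, hmod]
    push_cast
    by_cases hji : j = i
    · subst hji
      simp only [Evec, if_pos rfl, if_neg (Ne.symm hfi), hβ, hγ]
      rcases hs with rfl | rfl <;> push_cast <;> ring
    · by_cases hjf : j = f
      · subst hjf
        simp only [Evec, if_pos rfl, if_neg hfi, hβ, hγ]
        rcases hs with rfl | rfl <;> push_cast <;> ring
      · simp only [Evec, if_neg hji, if_neg hjf]
        ring
  · intro h0
    have := congrFun h0 i
    simp [Evec, (Ne.symm hfi : i ≠ f), Real.sqrt_eq_zero'] at this
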